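/- Let P be a smooth manifold (finite-dimensional, Hausdorff, paracompact), let A be a local algebra with residue homomorphism 0_A : A → ℝ, let p ∈ P, and let u : C^∞(P) → A be an identity-preserving ℝ-algebra homomorphism such that 0_A ∘ u equals the evaluation map ev_p : f ↦ f(p). Then u(f) = 0 for every smooth function f : P → ℝ that vanishes on some neighbourhood of p. -/

import Mathlib

open scoped Manifold

/-- Let `P` be a smooth manifold (finite-dimensional, Hausdorff,
paracompact), let `A` be a local algebra with residue homomorphism `0_A : A → ℝ`, let `p ∈ P`,
and let `u : C^∞(P) → A` be an identity-preserving `ℝ`-algebra homomorphism such that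
`0_A ∘ u` is the evaluation at `p`.  Then `u(f) = 0` for every smooth function `f : P → ℝ`
vanishing on some neighbourhood of `p`. -/
theorem pointProche_kills_locally_vanishing
    (E : Type) [NormedAddCommGroup E] [NormedSpace ℝ E] [FiniteDimensional ℝ E]
    (H : Type) [TopologicalSpace H] (I : ModelWithCorners ℝ E H)
    (P : Type) [TopologicalSpace P] [ChartedSpace H P] [IsManifold I (⊤ : ℕ∞) P]
    [T2Space P] [ParacompactSpace P]
    (A : Type) [CommRing A] [Algebra ℝ A] [FiniteDimensional ℝ A] [IsLocalRing A]
    (hres : Nonempty (IsLocalRing.ResidueField A ≃ₐ[ℝ] ℝ))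
    (ρ : A →ₐ[ℝ] ℝ)
    (p : P)
    (u : ContMDiffMap I 𝓘(ℝ, ℝ) P ℝ (⊤ : ℕ∞) →ₐ[ℝ] A)
    (hu : ∀ f : ContMDiffMap I 𝓘(ℝ, ℝ) P ℝ (⊤ : ℕ∞), ρ (u f) = f p) :
    ∀ f : ContMDiffMap I 𝓘(ℝ, ℝ) P ℝ (⊤ : ℕ∞), (∀ᶠ x in nhds p, f x = 0) → u f = 0 := by
  intro f hf
  -- the set where `f` vanishes is a neighbourhood of `p`
  have hU : {x : P | f x = 0} ∈ nhds p := hf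
  -- choose a smooth bump function `g` at `p` with support inside this set
  obtain ⟨g, hgsupp, -⟩ :=
    ((SmoothBumpFunction.nhds_basis_support (I := I) hU).mem_iff).mp hU
  set G : ContMDiffMap I 𝓘(ℝ, ℝ) P ℝ (⊤ : ℕ∞) := ⟨g, g.contMDiff⟩ with hG
  -- `f * G = 0`
  have hfG : f * G = 0 := by
    ext x
    show f x * g x = 0
    by_cases hx : g x = 0
    · simp [hx]
    · have : x ∈ tsupport g := subset_closure hx
      have : f x = 0 := hgsupp this
      simp [this]
  -- `u G` is a unit since `ρ (u G) = g p = 1 ≠ 0`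
  have hρG : ρ (u G) = 1 := by
    rw [hu G]
    exact g.eq_one
  -- kernel of ρ is the maximal ideal
  have hker : RingHom.ker (ρ : A →+* ℝ) = IsLocalRing.maximalIdeal A := by
    apply IsLocalRing.eq_maximalIdeal
    exact RingHom.ker_isMaximal_of_surjective _ (fun r => ⟨algebraMap ℝ A r, ρ.commutes r⟩)
  have hunit : IsUnit (u G) := by
    by_contra h
    have : u G ∈ IsLocalRing.maximalIdeal A := h
    rw [← hker] at this
    rw [RingHom.mem_ker] at this
    simp only [RingHom.coe_coe, hρG] at this
    exact one_ne_zero this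
  have h0 : u f * u G = 0 := by
    rw [← map_mul, hfG, map_zero]
  exact (hunit.mul_left_eq_zero).mp h0
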